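/- Consider the labelled transition system whose states are the ordinals, with a single (elided) label, and transitions given by ordinal membership, i.e., α ⟶ β iff β < α. Then for all ordinals α, β, γ with α < β: α ∼_γ β if and only if γ ≤ α. -/

import Mathlib

universe u v

/-- `Progress Tr R S` means relation `R` progresses to relation `S`
in the labelled transition system with transition relation `Tr`. -/
def Progress {St : Type u} {Δ : Type v} (Tr : St → Δ → St → Prop)
    (R S : Set (St × St)) : Prop :=
  ∀ p q, (p, q) ∈ R →
    (∀ a p', Tr p a p' → ∃ q', Tr q a q' ∧ (p', q') ∈ S) ∧
    (∀ a q', Tr q a q' → ∃ p', Tr p a p' ∧ (p', q') ∈ S)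

/-- Milner's stratification of bisimilarity: `∼₀ = univ`,
`∼_{α+1} = ⋃ {X | X ⤳ ∼_α}`, `∼_λ = ⋂_{β<λ} ∼_β` for limits. -/
noncomputable def Strat {St : Type u} {Δ : Type v} (Tr : St → Δ → St → Prop)
    (α : Ordinal.{w}) : Set (St × St) :=
  Ordinal.limitRecOn α
    Set.univ
    (fun _ ih => ⋃₀ {X | Progress Tr X ih})
    (fun o _ ih => ⋂ (β : Ordinal.{w}) (h : β < o), ih β h)

section
variable {St : Type u} {Δ : Type v} (Tr : St → Δ → St → Prop)

lemma strat_zero : Strat Tr (0 : Ordinal.{w}) = Set.univ := by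
  rw [Strat, Ordinal.limitRecOn_zero]

lemma strat_succ (δ : Ordinal.{w}) :
    Strat Tr (Order.succ δ) = ⋃₀ {X | Progress Tr X (Strat Tr δ)} := by
  rw [Strat, Ordinal.limitRecOn_succ]; rfl

lemma strat_limit (γ : Ordinal.{w}) (h : Order.IsSuccLimit γ) :
    Strat Tr γ = ⋂ (δ : Ordinal.{w}) (_ : δ < γ), Strat Tr δ := by
  rw [Strat, Ordinal.limitRecOn_limit _ _ _ _ h]; rfl

lemma strat_refl (γ : Ordinal.{w}) : ∀ p : St, (p, p) ∈ Strat Tr γ := by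
  induction γ using Ordinal.induction with
  | _ γ ih =>
    intro p
    rcases Ordinal.zero_or_succ_or_isSuccLimit γ with h | ⟨δ, rfl⟩ | h
    · subst h; rw [strat_zero]; trivial
    · rw [strat_succ]
      refine ⟨{x : St × St | x.1 = x.2}, fun a b hab => ?_, rfl⟩
      have hab' : a = b := hab
      subst hab'
      exact ⟨fun lb p' hp' => ⟨p', hp', ih δ (Order.lt_succ δ) p'⟩,
             fun lb q' hq' => ⟨q', hq', ih δ (Order.lt_succ δ) q'⟩⟩
    · rw [strat_limit _ _ h]
      simp only [Set.mem_iInter]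
      exact fun δ hδ => ih δ hδ p

lemma strat_symm (γ : Ordinal.{w}) : ∀ p q : St, (p, q) ∈ Strat Tr γ → (q, p) ∈ Strat Tr γ := by
  induction γ using Ordinal.induction with
  | _ γ ih =>
    intro p q hpq
    rcases Ordinal.zero_or_succ_or_isSuccLimit γ with h | ⟨δ, rfl⟩ | h
    · subst h; rw [strat_zero]; trivial
    · rw [strat_succ] at hpq ⊢
      obtain ⟨X, hX, hmem⟩ := hpq
      refine ⟨Prod.swap ⁻¹' X, fun a b hab => ?_, hmem⟩
      have h2 := hX b a hab
      exact ⟨fun l a' ha' => by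
        obtain ⟨b', hb', hS⟩ := (h2).2 l a' ha'
        exact ⟨b', hb', ih δ (Order.lt_succ δ) _ _ hS⟩,
        fun l b' hb' => by
        obtain ⟨a', ha', hS⟩ := (h2).1 l b' hb'
        exact ⟨a', ha', ih δ (Order.lt_succ δ) _ _ hS⟩⟩
    · rw [strat_limit _ _ h] at hpq ⊢
      simp only [Set.mem_iInter] at hpq ⊢
      exact fun δ hδ => ih δ hδ _ _ (hpq δ hδ)

end

theorem strat_ordinal_lts (α β γ : Ordinal.{u}) (hαβ : α < β) :
    (α, β) ∈ Strat (fun (a : Ordinal.{u}) (_ : Unit) (b : Ordinal.{u}) => b < a) γ ↔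
      γ ≤ α := by
  set Tr : Ordinal.{u} → Unit → Ordinal.{u} → Prop := fun a _ b => b < a with hTr
  induction γ using Ordinal.induction generalizing α β with
  | _ γ ih =>
    rcases Ordinal.zero_or_succ_or_isSuccLimit γ with h | ⟨δ, rfl⟩ | h
    · subst h
      rw [strat_zero]
      simp [zero_le]
    · rw [strat_succ]
      constructor
      · rintro ⟨X, hX, hmem⟩
        obtain ⟨p', hp', hS⟩ := (hX α β hmem).2 () α hαβ
        have : δ ≤ p' := (ih δ (Order.lt_succ δ) p' α hp').mp hS
        exact Order.succ_le_of_lt (lt_of_le_of_lt this hp')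
      · intro hγ
        refine ⟨{x : Ordinal.{u} × Ordinal.{u} |
            x.1 = x.2 ∨ (Order.succ δ ≤ x.1 ∧ Order.succ δ ≤ x.2)}, ?_, Or.inr ⟨hγ, hγ.trans hαβ.le⟩⟩
        rintro p q (hpq | ⟨h1, h2⟩)
        · cases hpq
          exact ⟨fun _ p' hp' => ⟨p', hp', strat_refl Tr δ p'⟩,
                 fun _ q' hq' => ⟨q', hq', strat_refl Tr δ q'⟩⟩
        · constructor
          · intro _ p' hp'
            rcases le_or_gt p' δ with hle | hlt
            · exact ⟨p', lt_of_le_of_lt hle (lt_of_lt_of_le (Order.lt_succ δ) h2),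
                strat_refl Tr δ p'⟩
            · refine ⟨δ, lt_of_lt_of_le (Order.lt_succ δ) h2, ?_⟩
              exact strat_symm Tr δ _ _ ((ih δ (Order.lt_succ δ) δ p' hlt).mpr le_rfl)
          · intro _ q' hq'
            rcases le_or_gt q' δ with hle | hlt
            · exact ⟨q', lt_of_le_of_lt hle (lt_of_lt_of_le (Order.lt_succ δ) h1),
                strat_refl Tr δ q'⟩
            · exact ⟨δ, lt_of_lt_of_le (Order.lt_succ δ) h1,
                (ih δ (Order.lt_succ δ) δ q' hlt).mpr le_rfl⟩
    · rw [strat_limit _ _ h]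
      simp only [Set.mem_iInter]
      constructor
      · intro hm
        refine (h.le_iff_forall_le).mpr fun δ hδ => ?_
        exact (ih δ hδ α β hαβ).mp (hm δ hδ)
      · intro hγ δ hδ
        exact (ih δ hδ α β hαβ).mpr ((le_of_lt hδ).trans hγ)
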